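/- The bit-twiddling un-dilation algorithm is correct: for t < 2^32 with all odd-position bits zero (i.e. t &&& 0xAAAAAAAA = 0), applying successively t ↦ (t ||| (t >>> 1)) &&& 0x33333333, t ↦ (t ||| (t >>> 2)) &&& 0x0F0F0F0F, t ↦ (t ||| (t >>> 4)) &&& 0x00FF00FF, t ↦ (t ||| (t >>> 8)) &&& 0x0000FFFF yields the unique k < 2^16 with dilate(k) = t. -/

import Mathlib

def dilate (k : ℕ) : ℕ := ∑ t ∈ Finset.range (k + 1), (k.testBit t).toNat * 4 ^ t

lemma dilate_pad (k n : ℕ) (hn : k + 1 ≤ n) :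
    dilate k = ∑ t ∈ Finset.range n, (k.testBit t).toNat * 4 ^ t := by
  unfold dilate
  apply Finset.sum_subset (Finset.range_subset_range.2 hn)
  intro x _ hx
  simp only [Finset.mem_range, not_lt] at hx
  have : k.testBit x = false := Nat.testBit_lt_two_pow (lt_of_le_of_lt (by omega) (Nat.lt_two_pow_self (n := x)))
  simp [this]

lemma dilate_rec (k : ℕ) : dilate k = 4 * dilate (k / 2) + k % 2 := by
  have h1 : dilate k = ∑ t ∈ Finset.range (k + 2), (k.testBit t).toNat * 4 ^ t :=
    dilate_pad k (k+2) (by omega)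
  have h2 : dilate (k/2) = ∑ t ∈ Finset.range (k + 1), ((k/2).testBit t).toNat * 4 ^ t :=
    dilate_pad (k/2) (k+1) (by omega)
  rw [h1, h2, Finset.sum_range_succ']
  simp only [Nat.testBit_succ, pow_succ, Nat.testBit_zero, Finset.mul_sum]
  have : (decide (k % 2 = 1)).toNat * 4 ^ 0 = k % 2 := by
    rcases Nat.mod_two_eq_zero_or_one k with h | h <;> simp [h]
  rw [this]
  ring_nf

lemma dilate_testBit (k j : ℕ) :
    (dilate k).testBit j = (decide (j % 2 = 0) && k.testBit (j / 2)) := by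
  induction j using Nat.strong_induction_on generalizing k with
  | _ j ih =>
    match j with
    | 0 =>
      rw [dilate_rec]
      simp [Nat.testBit_zero]
      omega
    | 1 =>
      rw [dilate_rec]
      have : (4 * dilate (k/2) + k % 2) / 2 = 2 * dilate (k/2) := by omega
      simp [Nat.testBit_succ, this, Nat.testBit_zero]
    | (j+2) =>
      rw [dilate_rec]
      have : (4 * dilate (k/2) + k % 2) / 2 / 2 = dilate (k/2) := by omega
      rw [show j+2 = (j+1)+1 from rfl, Nat.testBit_succ, Nat.testBit_succ, this,
        ih j (by omega)]
      have h1 : (j+2) % 2 = j % 2 := by omega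
      have h2 : (j+2) / 2 = j / 2 + 1 := by omega
      rw [h1, h2]
      rcases Nat.even_or_odd j with h | h
      · simp [Nat.testBit_succ]
      · have : j % 2 = 1 := Nat.odd_iff.mp h
        simp [this]

lemma dilate_lt (n k : ℕ) (h : k < 2 ^ n) : dilate k < 4 ^ n := by
  induction n generalizing k with
  | zero =>
    interval_cases k
    simp [dilate]
  | succ n ih =>
    rw [dilate_rec]
    have := ih (k/2) (by omega)
    have : 4 ^ (n+1) = 4 * 4 ^ n := by ring
    omega

lemma dilate_inj {a b : ℕ} (h : dilate a = dilate b) : a = b := by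
  apply Nat.eq_of_testBit_eq
  intro i
  have h1 := dilate_testBit a (2*i)
  have h2 := dilate_testBit b (2*i)
  rw [h] at h1
  rw [h2] at h1
  simpa [Nat.mul_div_cancel_left] using h1.symm

lemma dilate_surj (n : ℕ) : ∀ t, t < 4 ^ n → (∀ j, t.testBit (2*j+1) = false) →
    ∃ k < 2 ^ n, dilate k = t := by
  induction n with
  | zero =>
    intro t ht _
    interval_cases t
    exact ⟨0, by norm_num, by simp [dilate]⟩
  | succ n ih =>
    intro t ht hodd
    have h4 : t / 4 < 4 ^ n := by
      have : 4 ^ (n+1) = 4 * 4 ^ n := by ring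
      omega
    have hodd' : ∀ j, (t/4).testBit (2*j+1) = false := by
      intro j
      have h4eq : t / 4 = t >>> 2 := by
        rw [Nat.shiftRight_eq_div_pow]
      rw [h4eq, Nat.testBit_shiftRight, show 2 + (2*j+1) = 2*(j+1)+1 from by ring, hodd]
    obtain ⟨k', hk', hdk'⟩ := ih (t/4) h4 hodd'
    have hb1 : t.testBit 1 = false := hodd 0
    have ht1 : t / 2 % 2 = 0 := by
      rw [Nat.testBit_succ, Nat.testBit_zero] at hb1
      simp at hb1
      omega
    refine ⟨2 * k' + t % 2, by omega, ?_⟩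
    rw [dilate_rec]
    have : (2 * k' + t % 2) / 2 = k' := by omega
    rw [this, hdk']
    omega

lemma alg_dilate (k : ℕ) (hk : k < 2 ^ 16) :
    let t := dilate k
    let r1 := (t ||| (t >>> 1)) &&& 0x33333333
    let r2 := (r1 ||| (r1 >>> 2)) &&& 0x0F0F0F0F
    let r3 := (r2 ||| (r2 >>> 4)) &&& 0x00FF00FF
    let r4 := (r3 ||| (r3 >>> 8)) &&& 0x0000FFFF
    r4 = k := by
  intro t r1 r2 r3 r4
  apply Nat.eq_of_testBit_eq
  intro i
  rcases lt_or_ge i 16 with hi | hi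
  · simp only [r4, r3, r2, r1, t, Nat.testBit_and, Nat.testBit_or, Nat.testBit_shiftRight,
      dilate_testBit]
    interval_cases i <;> norm_num [Nat.testBit_eq_decide_div_mod_eq]
  · have h1 : k.testBit i = false := Nat.testBit_lt_two_pow
      (lt_of_lt_of_le hk (Nat.pow_le_pow_right (by norm_num) hi))
    have h2 : r4.testBit i = false := by
      apply Nat.testBit_lt_two_pow
      calc r4 ≤ 0x0000FFFF := Nat.and_le_right
        _ < 2 ^ 16 := by norm_num
        _ ≤ 2 ^ i := Nat.pow_le_pow_right (by norm_num) hi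
    rw [h1, h2]

theorem undilate_algorithm_correct (t : ℕ) (ht : t < 2 ^ 32) (hodd : t &&& 0xAAAAAAAA = 0) :
    let r1 := (t ||| (t >>> 1)) &&& 0x33333333
    let r2 := (r1 ||| (r1 >>> 2)) &&& 0x0F0F0F0F
    let r3 := (r2 ||| (r2 >>> 4)) &&& 0x00FF00FF
    let r4 := (r3 ||| (r3 >>> 8)) &&& 0x0000FFFF
    r4 < 2 ^ 16 ∧ dilate r4 = t ∧ ∀ k : ℕ, k < 2 ^ 16 → dilate k = t → k = r4 := by
  intro r1 r2 r3 r4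
  have hbits : ∀ j, t.testBit (2*j+1) = false := by
    intro j
    rcases lt_or_ge j 16 with hj | hj
    · have h := congrArg (fun x => x.testBit (2*j+1)) hodd
      simp only [Nat.testBit_and, Nat.zero_testBit] at h
      have hm : Nat.testBit 0xAAAAAAAA (2*j+1) = true := by
        interval_cases j <;> norm_num [Nat.testBit_eq_decide_div_mod_eq]
      rw [hm] at h
      simpa using h
    · apply Nat.testBit_lt_two_pow
      calc t < 2 ^ 32 := ht
        _ ≤ 2 ^ (2*j+1) := Nat.pow_le_pow_right (by norm_num) (by omega)
  obtain ⟨k, hk, hdk⟩ := dilate_surj 16 t (by norm_num; omega) hbits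
  have h4 : r4 = k := by
    simp only [r4, r3, r2, r1, ← hdk]
    exact alg_dilate k hk
  refine ⟨h4 ▸ hk, by rw [h4, hdk], fun k' hk' hdk' => ?_⟩
  rw [h4]
  exact dilate_inj (hdk'.trans hdk.symm)
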